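/- arXiv:1309.7752 — 2 statements merged into one kernel-verified Lean document; each statement's English description precedes it below -/
import Mathlib

section
/- Let k ≥ 2 and suppose that for each j = 1,…,k the variables X_{j1} satisfy E|X_{j1}|³ < ∞ and X_{j1} is distributed on the lattice {x_j + ν e_j : ν ∈ ℤ} with maximal lattice edge width e_j, that min_{1≤j≤k} liminf_{n→∞} n_j/n > 0, that all the points x_j are equal, and that for every pair j₁ < j₂ the ratio ρ_{j₁j₂} = (e_{j₂} n_{j₁})/(e_{j₁} n_{j₂}) equals a fixed rational number not depending on n. Then the one-term Edgeworth expansion fails: it is NOT the case that sup_{x∈ℝ} |P{(S − E S)/(Var S)^{1/2} ≤ x} − Φ(x) − n^{−1/2}(β/6)(1 − x²)φ(x)| = o(n^{−1/2}); equivalently, limsup_{n→∞} n^{1/2} sup_{x∈ℝ} |P{(S − E S)/(Var S)^{1/2} ≤ x} − Φ(x) − n^{−1/2}(β/6)(1 − x²)φ(x)| > 0. -/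
open MeasureTheory ProbabilityTheory Filter

/-- Standard normal density. -/
noncomputable def gphi (x : ℝ) : ℝ := (Real.sqrt (2 * Real.pi))⁻¹ * Real.exp (-x ^ 2 / 2)

/-- Standard normal distribution function. -/
noncomputable def gPhi (x : ℝ) : ℝ := ∫ t in Set.Iic x, gphi t
section Aux

lemma gphi_integrable : Integrable gphi := by
  have h1 : Integrable (fun x : ℝ => Real.exp (-(1/2 : ℝ) * x ^ 2)) :=
    integrable_exp_neg_mul_sq (by norm_num)
  have h2 : gphi = fun x : ℝ => (Real.sqrt (2 * Real.pi))⁻¹ * Real.exp (-(1/2 : ℝ) * x ^ 2) := by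
    funext x; unfold gphi; ring_nf
  rw [h2]
  exact h1.const_mul _

lemma gphi_cont : Continuous gphi := by
  unfold gphi; continuity

lemma gPhi_lipschitz : ∃ C : ℝ, 0 ≤ C ∧ ∀ x y : ℝ, |gPhi x - gPhi y| ≤ C * |x - y| := by
  refine ⟨(Real.sqrt (2 * Real.pi))⁻¹, by positivity, fun x y => ?_⟩
  have hint : ∀ a : ℝ, IntegrableOn gphi (Set.Iic a) := fun a => gphi_integrable.integrableOn
  have h := intervalIntegral.integral_Iic_sub_Iic (hint y) (hint x)
  have hgx : gPhi x - gPhi y = ∫ t in y..x, gphi t := h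
  rw [hgx]
  have hb := intervalIntegral.norm_integral_le_of_norm_le_const
    (C := (Real.sqrt (2 * Real.pi))⁻¹) (f := gphi) (a := y) (b := x) ?_
  · simpa [Real.norm_eq_abs, abs_sub_comm x y] using hb
  · intro t _
    rw [Real.norm_eq_abs, abs_of_nonneg (by unfold gphi; positivity)]
    unfold gphi
    have h1 : Real.exp (-t ^ 2 / 2) ≤ 1 := Real.exp_le_one_iff.2 (by nlinarith [sq_nonneg t])
    exact mul_le_of_le_one_right (by positivity) h1

lemma gPhi_cont : Continuous gPhi := by
  obtain ⟨C, hC0, hC⟩ := gPhi_lipschitz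
  apply Metric.continuous_iff.2
  intro x ε hε
  refine ⟨ε / (C + 1), by positivity, fun y hy => ?_⟩
  rw [Real.dist_eq] at hy ⊢
  calc |gPhi y - gPhi x| ≤ C * |y - x| := hC y x
    _ ≤ (C + 1) * |y - x| := by nlinarith [abs_nonneg (y - x)]
    _ < (C + 1) * (ε / (C + 1)) := by
        apply mul_lt_mul_of_pos_left hy (by linarith)
    _ = ε := by field_simp

/-- If a random variable lives a.s. on a grid `c + h'ℤ` and puts mass ≥ 3/4 on `[lo,hi]`,
then it has an atom of mass at least `(3/4) / ((hi-lo)/h' + 1)`. -/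
lemma exists_atom_of_grid {Ω : Type*} [MeasureSpace Ω] [IsProbabilityMeasure (ℙ : Measure Ω)]
    (T : Ω → ℝ) (hT : Measurable T) (c h' lo hi : ℝ) (hh : 0 < h') (hlohi : lo ≤ hi)
    (hgrid : ∀ᵐ ω ∂ℙ, ∃ z : ℤ, T ω = c + z * h')
    (hmass : (3:ℝ)/4 ≤ (ℙ {ω | T ω ∈ Set.Icc lo hi}).toReal) :
    ∃ x₀ : ℝ, (3:ℝ)/4 / ((hi - lo)/h' + 1) ≤ (ℙ {ω | T ω = x₀}).toReal := by
  classical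
  set Z : Finset ℤ := Finset.Icc ⌈(lo - c)/h'⌉ ⌊(hi - c)/h'⌋ with hZ
  have hsub : ∀ᵐ ω ∂ℙ, T ω ∈ Set.Icc lo hi → ∃ z ∈ Z, T ω = c + z * h' := by
    filter_upwards [hgrid] with ω ⟨z, hz⟩ hmem
    refine ⟨z, ?_, hz⟩
    rw [hZ, Finset.mem_Icc]
    obtain ⟨h1, h2⟩ := hmem
    rw [hz] at h1 h2
    constructor
    · exact Int.ceil_le.2 ((div_le_iff₀ hh).2 (by linarith))
    · exact Int.le_floor.2 ((le_div_iff₀ hh).2 (by linarith))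
  have hmeasset : ∀ x : ℝ, MeasurableSet {ω | T ω = x} := fun x =>
    hT (measurableSet_singleton x)
  have hUnion : (ℙ {ω | T ω ∈ Set.Icc lo hi}) ≤ ∑ z ∈ Z, ℙ {ω | T ω = c + z * h'} := by
    have hle : (ℙ {ω | T ω ∈ Set.Icc lo hi}) ≤ ℙ (⋃ z ∈ Z, {ω | T ω = c + z * h'}) := by
      apply measure_mono_ae
      filter_upwards [hsub] with ω hω hmem
      obtain ⟨z, hzZ, hz⟩ := hω hmem
      exact Set.mem_biUnion hzZ hz
    exact hle.trans (measure_biUnion_finset_le Z _)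
  have hsum_toReal : (ℙ {ω | T ω ∈ Set.Icc lo hi}).toReal
      ≤ ∑ z ∈ Z, (ℙ {ω | T ω = c + z * h'}).toReal := by
    rw [← ENNReal.toReal_sum (fun z _ => measure_ne_top _ _)]
    exact ENNReal.toReal_mono (ENNReal.sum_ne_top.2 fun z _ => measure_ne_top _ _) hUnion
  have hZne : Z.Nonempty := by
    by_contra hne
    rw [Finset.not_nonempty_iff_eq_empty] at hne
    rw [hne, Finset.sum_empty] at hsum_toReal
    linarith [hmass.trans hsum_toReal]
  obtain ⟨z₀, hz₀Z, hz₀⟩ := Finset.exists_max_image Z (fun z => (ℙ {ω | T ω = c + z * h'}).toReal) hZne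
  refine ⟨c + z₀ * h', ?_⟩
  have hcard_le : (Z.card : ℝ) ≤ (hi - lo)/h' + 1 := by
    rw [hZ, Int.card_Icc]
    have h1 : (⌈(lo - c)/h'⌉ : ℝ) ≥ (lo - c)/h' := Int.le_ceil _
    have h2 : (⌊(hi - c)/h'⌋ : ℝ) ≤ (hi - c)/h' := Int.floor_le _
    rcases le_or_gt ⌈(lo - c)/h'⌉ (⌊(hi - c)/h'⌋ + 1) with h | h
    · have hcast : ((⌊(hi - c)/h'⌋ + 1 - ⌈(lo - c)/h'⌉).toNat : ℝ)
          = ((⌊(hi - c)/h'⌋ : ℝ) + 1 - (⌈(lo - c)/h'⌉ : ℝ)) := by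
        rw [← Int.cast_natCast, Int.toNat_of_nonneg (by omega)]
        push_cast; ring
      rw [hcast]
      have heq : (hi - c)/h' - (lo - c)/h' = (hi - lo)/h' := by ring
      linarith
    · rw [Int.toNat_of_nonpos (by omega)]
      have : (0:ℝ) ≤ (hi - lo)/h' := div_nonneg (by linarith) hh.le
      simp
      linarith
  have hsum_le : ∑ z ∈ Z, (ℙ {ω | T ω = c + z * h'}).toReal
      ≤ Z.card * (ℙ {ω | T ω = c + z₀ * h'}).toReal := by
    calc ∑ z ∈ Z, (ℙ {ω | T ω = c + z * h'}).toReal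
        ≤ ∑ _z ∈ Z, (ℙ {ω | T ω = c + z₀ * h'}).toReal := Finset.sum_le_sum fun z hz => hz₀ z hz
      _ = Z.card * (ℙ {ω | T ω = c + z₀ * h'}).toReal := by
          rw [Finset.sum_const, nsmul_eq_mul]
  have hfrac_pos : (0:ℝ) < (hi - lo)/h' + 1 := by
    have : (0:ℝ) ≤ (hi - lo)/h' := div_nonneg (by linarith) hh.le
    linarith
  rw [div_le_iff₀ hfrac_pos]
  have h34 : (3:ℝ)/4 ≤ Z.card * (ℙ {ω | T ω = c + z₀ * h'}).toReal :=
    le_trans (hmass.trans hsum_toReal) hsum_le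
  have hatom_nonneg : (0:ℝ) ≤ (ℙ {ω | T ω = c + z₀ * h'}).toReal := ENNReal.toReal_nonneg
  nlinarith [hatom_nonneg, hcard_le, h34]

end Aux

set_option maxHeartbeats 1000000 in
/-- **Theorem 1(ii)** (Decrouez & Hall).  In the setting of Theorem 1, if every ratio
`ρ_{j₁j₂} = (e_{j₂} n_{j₁}) / (e_{j₁} n_{j₂})` equals a fixed rational number not depending
on `n`, and all the lattice locations `x_j` coincide, then the one-term Edgeworth expansion
fails: the supremum over `x` of the error of the expansion is *not* `o(n^{-1/2})`. -/
theorem edgeworth_one_term_fails_of_rational_ratios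
    {Ω : Type*} [MeasureSpace Ω] [IsProbabilityMeasure (ℙ : Measure Ω)]
    (k : ℕ) (hk : 2 ≤ k)
    (X : Fin k → ℕ → Ω → ℝ)
    (e xl : Fin k → ℝ)
    (hmeas : ∀ j i, Measurable (X j i))
    (hindep : iIndepFun
      (fun p : Fin k × ℕ => X p.1 p.2) ℙ)
    (hident : ∀ j i, Measure.map (X j i) ℙ = Measure.map (X j 0) ℙ)
    (hmom3 : ∀ j, Integrable (fun ω => |X j 0 ω| ^ 3) ℙ)
    (hepos : ∀ j, 0 < e j)
    (hlattice : ∀ j, ∀ᵐ ω ∂ℙ, ∃ ν : ℤ, X j 0 ω = xl j + ν * e j)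
    (hmaximal : ∀ j, ∀ e' x' : ℝ, 0 < e' →
      (∀ᵐ ω ∂ℙ, ∃ ν : ℤ, X j 0 ω = x' + ν * e') → e' ≤ e j)
    (hnondeg : ∀ j, 0 < variance (X j 0) ℙ)
    (nn : ℕ → Fin k → ℕ) (hnpos : ∀ m j, 0 < nn m j)
    (n : ℕ → ℕ) (hn : ∀ m, n m = ∑ j, nn m j) (hmono : StrictMono n)
    (hfrac : ∀ j, 0 < Filter.liminf (fun m => (nn m j : ℝ) / (n m : ℝ)) atTop)
    (S : ℕ → Ω → ℝ)
    (hS : ∀ m ω, S m ω = ∑ j, (nn m j : ℝ)⁻¹ * ∑ i ∈ Finset.range (nn m j), X j i ω)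
    (ES VarS β : ℕ → ℝ)
    (hES : ∀ m, ES m = ∫ ω, S m ω ∂ℙ)
    (hVarS : ∀ m, VarS m = ∫ ω, (S m ω - ES m) ^ 2 ∂ℙ)
    (hβ : ∀ m, β m = Real.sqrt (n m) * (∫ ω, (S m ω - ES m) ^ 3 ∂ℙ) / Real.sqrt (VarS m) ^ 3)
    -- all lattice locations equal
    (hxeq : ∀ j j' : Fin k, xl j = xl j')
    -- every ratio ρ_{j₁j₂} equals a fixed rational number, not depending on n
    (hρrat : ∀ j₁ j₂ : Fin k, j₁ < j₂ → ∃ q : ℚ, ∀ m,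
      (e j₂ * (nn m j₁ : ℝ)) / (e j₁ * (nn m j₂ : ℝ)) = (q : ℝ)) :
    -- conclusion: it is NOT the case that the sup of the error is o(n^{-1/2})
    ¬ (∀ ε > 0, ∀ᶠ m in atTop, ∀ x : ℝ,
      |(ℙ {ω | (S m ω - ES m) / Real.sqrt (VarS m) ≤ x}).toReal
          - gPhi x - (Real.sqrt (n m))⁻¹ * (β m / 6) * (1 - x ^ 2) * gphi x|
        ≤ ε * (Real.sqrt (n m))⁻¹) := by
  classical
  intro hcontra
  -- basic integrability
  have hm2 : ∀ j i, MemLp (X j i) 2 ℙ := by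
    intro j i
    have h0 : MemLp (X j 0) 2 ℙ := by
      rw [memLp_two_iff_integrable_sq (hmeas j 0).aestronglyMeasurable]
      have hbound : ∀ ω, ‖X j 0 ω ^ 2‖ ≤ 1 + |X j 0 ω| ^ 3 := by
        intro ω
        rw [Real.norm_eq_abs, abs_pow, sq_abs]
        rcases le_or_gt (|X j 0 ω|) 1 with h | h
        · nlinarith [abs_nonneg (X j 0 ω), pow_le_one₀ (abs_nonneg (X j 0 ω)) h (n := 2),
            pow_nonneg (abs_nonneg (X j 0 ω)) 3, sq_abs (X j 0 ω)]
        · nlinarith [abs_nonneg (X j 0 ω), sq_abs (X j 0 ω)]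
      exact Integrable.mono' ((integrable_const 1).add (hmom3 j))
        ((hmeas j 0).pow_const 2).aestronglyMeasurable
        (Filter.Eventually.of_forall hbound)
    have idd : IdentDistrib (X j 0) (X j i) ℙ ℙ :=
      ⟨(hmeas j 0).aemeasurable, (hmeas j i).aemeasurable, (hident j i).symm⟩
    exact idd.memLp_snd h0
  have hvar_i : ∀ j i, variance (X j i) ℙ = variance (X j 0) ℙ := by
    intro j i
    have idd : IdentDistrib (X j i) (X j 0) ℙ ℙ :=
      ⟨(hmeas j i).aemeasurable, (hmeas j 0).aemeasurable, hident j i⟩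
    exact idd.variance_eq
  have hSmeas : ∀ m, Measurable (S m) := by
    intro m
    have : S m = fun ω => ∑ j, (nn m j : ℝ)⁻¹ * ∑ i ∈ Finset.range (nn m j), X j i ω :=
      funext fun ω => hS m ω
    rw [this]
    exact Finset.measurable_sum _ fun j _ =>
      (Finset.measurable_sum _ fun i _ => hmeas j i).const_mul _
  have hSmem : ∀ m, MemLp (S m) 2 ℙ := by
    intro m
    have hfe : S m = ∑ j : Fin k, fun ω => (nn m j : ℝ)⁻¹ * ∑ i ∈ Finset.range (nn m j), X j i ω := by
      funext ω; rw [hS m ω]; simp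
    rw [hfe]
    refine memLp_finset_sum' _ fun j _ => ?_
    have : (fun ω => (nn m j : ℝ)⁻¹ * ∑ i ∈ Finset.range (nn m j), X j i ω)
        = fun ω => (nn m j : ℝ)⁻¹ * (∑ i ∈ Finset.range (nn m j), fun ω' => X j i ω') ω := by
      funext ω; simp
    rw [this]
    exact (memLp_finset_sum' _ fun i _ => hm2 j i).const_mul _
  -- variance of S m
  have hVarSum : ∀ m, variance (S m) ℙ = ∑ j, variance (X j 0) ℙ / nn m j := by
    intro m
    have hle : ∀ j, nn m j ≤ n m := by
      intro j; rw [hn m]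
      exact Finset.single_le_sum (f := fun j => nn m j) (fun j _ => Nat.zero_le _)
        (Finset.mem_univ j)
    set F : Finset (Fin k × ℕ) :=
      (Finset.univ ×ˢ Finset.range (n m)).filter (fun p => p.2 < nn m p.1) with hF
    set Y : Fin k × ℕ → Ω → ℝ := fun p ω => (nn m p.1 : ℝ)⁻¹ * X p.1 p.2 ω with hY
    have hSF : S m = ∑ p ∈ F, Y p := by
      funext ω
      rw [hS m ω, Finset.sum_apply, hF, Finset.sum_filter, Finset.sum_product]
      refine Finset.sum_congr rfl fun j _ => ?_
      rw [Finset.mul_sum]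
      rw [← Finset.sum_subset (Finset.range_subset_range.2 (hle j))
        (fun i _ hi => if_neg (by simpa using hi))]
      exact Finset.sum_congr rfl fun i hi => (if_pos (Finset.mem_range.1 hi)).symm
    have hmemF : ∀ p ∈ F, MemLp (Y p) 2 ℙ := fun p _ => (hm2 p.1 p.2).const_mul _
    have hpairs : Set.Pairwise (↑F) fun p q => IndepFun (Y p) (Y q) ℙ := by
      intro p _ q _ hpq
      have base : IndepFun (X p.1 p.2) (X q.1 q.2) ℙ := hindep.indepFun hpq
      exact base.comp (measurable_const_mul _) (measurable_const_mul _)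
    rw [hSF, IndepFun.variance_sum hmemF hpairs]
    have hvarY : ∀ p : Fin k × ℕ, variance (Y p) ℙ
        = ((nn m p.1 : ℝ)⁻¹)^2 * variance (X p.1 0) ℙ := by
      intro p
      rw [hY]
      simp only
      rw [variance_const_mul, hvar_i p.1 p.2]
    rw [Finset.sum_congr rfl (fun p _ => hvarY p), hF, Finset.sum_filter, Finset.sum_product]
    refine Finset.sum_congr rfl fun j _ => ?_
    rw [← Finset.sum_subset (Finset.range_subset_range.2 (hle j))
      (fun i _ hi => if_neg (by simpa using hi))]
    rw [Finset.sum_congr rfl (fun i hi => if_pos (Finset.mem_range.1 hi))]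
    have hcongr : ∀ x ∈ Finset.range (nn m j),
        ((nn m (j, x).1 : ℝ))⁻¹ ^ 2 * variance (X (j, x).1 0) ℙ
          = ((nn m j : ℝ))⁻¹ ^ 2 * variance (X j 0) ℙ := fun x _ => rfl
    rw [Finset.sum_congr rfl hcongr, Finset.sum_const, Finset.card_range, nsmul_eq_mul]
    have hne : (nn m j : ℝ) ≠ 0 := Nat.cast_ne_zero.2 (hnpos m j).ne'
    field_simp
  have hVarSeq : ∀ m, VarS m = variance (S m) ℙ := by
    intro m
    rw [hVarS m, variance_eq_integral (hSmem m).aemeasurable]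
    have hfun : (fun ω => (S m ω - ES m)^2)
        = ((S m - fun _ => (∫ ω, S m ω ∂ℙ)) ^ (2:ℕ)) := by
      funext ω
      simp [hES m]
    simp only [hES m]
  have hVpos : ∀ m, 0 < VarS m := by
    intro m
    rw [hVarSeq m, hVarSum m]
    refine Finset.sum_pos (fun j _ => ?_) ⟨⟨0, by omega⟩, Finset.mem_univ _⟩
    have := hnondeg j
    have h2 : (0:ℝ) < nn m j := by exact_mod_cast hnpos m j
    positivity
  -- the distinguished index 0
  set j0 : Fin k := ⟨0, by omega⟩ with hj0
  -- rational ratios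
  have hqex : ∀ j : Fin k, ∃ q : ℚ, 0 < (q:ℝ) ∧
      ∀ m, (e j / (nn m j : ℝ)) = (q:ℝ) * (e j0 / (nn m j0 : ℝ)) := by
    intro j
    rcases eq_or_ne j j0 with rfl | hne
    · exact ⟨1, by norm_num, fun m => by rw [Rat.cast_one, one_mul]⟩
    · have hlt : j0 < j := by
        refine lt_of_le_of_ne ?_ (Ne.symm hne)
        exact Fin.mk_le_of_le_val (Nat.zero_le _)
      obtain ⟨q, hq⟩ := hρrat j0 j hlt
      refine ⟨q, ?_, fun m => ?_⟩
      · have h0 := hq 0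
        have h1 : (0:ℝ) < (nn 0 j0 : ℝ) := by exact_mod_cast hnpos 0 j0
        have h2 : (0:ℝ) < (nn 0 j : ℝ) := by exact_mod_cast hnpos 0 j
        have he1 : (0:ℝ) < e j0 := hepos j0
        have he2 : (0:ℝ) < e j := hepos j
        rw [← h0]
        positivity
      · have := hq m
        have h1 : (0:ℝ) < (nn m j0 : ℝ) := by exact_mod_cast hnpos m j0
        have h2 : (0:ℝ) < (nn m j : ℝ) := by exact_mod_cast hnpos m j
        have he0 : (0:ℝ) < e j0 := hepos j0
        field_simp at this ⊢
        nlinarith [this]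
  choose q hqpos hqeq using hqex
  set D : ℕ := ∏ j, (q j).den with hD
  have hDpos : 0 < D := Finset.prod_pos fun j _ => (q j).pos
  have hDR : (0:ℝ) < (D:ℝ) := by exact_mod_cast hDpos
  have hzqex : ∀ j : Fin k, ∃ z : ℤ, ((q j : ℝ)) * D = (z:ℝ) := by
    intro j
    have hdvd : (q j).den ∣ D := Finset.dvd_prod_of_mem (fun j => (q j).den) (Finset.mem_univ j)
    obtain ⟨t, ht⟩ := hdvd
    refine ⟨(q j).num * t, ?_⟩
    have hden : ((q j).den : ℝ) ≠ 0 := by exact_mod_cast (q j).den_nz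
    have hcast : ((q j : ℝ)) = ((q j).num : ℝ) / ((q j).den : ℝ) := Rat.cast_def (q j)
    rw [hcast, ht]
    push_cast
    field_simp
  choose zq hzq using hzqex
  -- all variables lie on the common lattice a.s.
  have hlat_all : ∀ᵐ ω ∂ℙ, ∀ j : Fin k, ∀ i : ℕ, ∃ ν : ℤ, X j i ω = xl j0 + ν * e j := by
    rw [ae_all_iff]
    intro j
    rw [ae_all_iff]
    intro i
    have pmeas : MeasurableSet {x : ℝ | ∃ ν : ℤ, x = xl j + ν * e j} := by
      have hset : {x : ℝ | ∃ ν : ℤ, x = xl j + ν * e j} = ⋃ ν : ℤ, {xl j + ν * e j} := by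
        ext x
        simp only [Set.mem_setOf_eq, Set.mem_iUnion, Set.mem_singleton_iff]
      rw [hset]
      exact MeasurableSet.iUnion fun ν => measurableSet_singleton _
    have idd : IdentDistrib (X j 0) (X j i) ℙ ℙ :=
      ⟨(hmeas j 0).aemeasurable, (hmeas j i).aemeasurable, (hident j i).symm⟩
    have h0 : ∀ᵐ ω ∂ℙ, X j 0 ω ∈ {x : ℝ | ∃ ν : ℤ, x = xl j + ν * e j} := by
      filter_upwards [hlattice j] with ω ⟨ν, hν⟩
      exact ⟨ν, hν⟩
    have hi := idd.ae_snd pmeas h0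
    filter_upwards [hi] with ω hω
    obtain ⟨ν, hν⟩ := hω
    exact ⟨ν, by rw [hν, hxeq j j0]⟩
  -- a.s. S m lies on a grid of span (e j0)/(nn m j0 * D)
  have hgridae : ∀ m, ∀ᵐ ω ∂ℙ, ∃ z : ℤ,
      S m ω = (k:ℝ) * xl j0 + z * (e j0 / ((nn m j0 : ℝ) * D)) := by
    intro m
    filter_upwards [hlat_all] with ω hω
    choose ν hν using hω
    have hsum : ∀ j : Fin k, (nn m j : ℝ)⁻¹ * ∑ i ∈ Finset.range (nn m j), X j i ω
        = xl j0 + ((∑ i ∈ Finset.range (nn m j), ν j i : ℤ) : ℝ) * (e j / (nn m j : ℝ)) := by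
      intro j
      have hne : (nn m j : ℝ) ≠ 0 := Nat.cast_ne_zero.2 (hnpos m j).ne'
      have h1 : ∑ i ∈ Finset.range (nn m j), X j i ω
          = (nn m j : ℝ) * xl j0 + ((∑ i ∈ Finset.range (nn m j), ν j i : ℤ) : ℝ) * e j := by
        rw [Finset.sum_congr rfl (fun i _ => hν j i), Finset.sum_add_distrib,
          Finset.sum_const, Finset.card_range, ← Finset.sum_mul]
        push_cast
        ring
      rw [h1]
      field_simp
    refine ⟨∑ j, (∑ i ∈ Finset.range (nn m j), ν j i) * zq j, ?_⟩
    rw [hS m ω, Finset.sum_congr rfl (fun j _ => hsum j), Finset.sum_add_distrib,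
      Finset.sum_const, Finset.card_univ, Fintype.card_fin, nsmul_eq_mul]
    congr 1
    have hstep : ∀ j : Fin k, ((∑ i ∈ Finset.range (nn m j), ν j i : ℤ) : ℝ) * (e j / (nn m j : ℝ))
        = (((∑ i ∈ Finset.range (nn m j), ν j i) * zq j : ℤ) : ℝ)
            * (e j0 / ((nn m j0 : ℝ) * D)) := by
      intro j
      rw [hqeq j m]
      have hqj : (q j : ℝ) = (zq j : ℝ) / D := by
        rw [← hzq j]; field_simp
      rw [hqj]
      have hn0 : (nn m j0 : ℝ) ≠ 0 := Nat.cast_ne_zero.2 (hnpos m j0).ne'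
      push_cast
      field_simp
    rw [Finset.sum_congr rfl (fun j _ => hstep j), ← Finset.sum_mul]
    push_cast
    ring
  -- Chebyshev: at least 3/4 of the mass within 2 standard deviations
  have hcheb : ∀ m, (3:ℝ)/4 ≤ (ℙ {ω | S m ω ∈ Set.Icc (ES m - 2*Real.sqrt (VarS m))
      (ES m + 2*Real.sqrt (VarS m))}).toReal := by
    intro m
    set sd := Real.sqrt (VarS m) with hsd
    have hsdpos : 0 < sd := Real.sqrt_pos.2 (hVpos m)
    have hch := meas_ge_le_variance_div_sq (μ := ℙ) (hSmem m) (c := 2*sd) (by positivity)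
    have hESint : (∫ ω, S m ω ∂ℙ) = ES m := (hES m).symm
    rw [hESint] at hch
    have hvv : variance (S m) ℙ / (2*sd)^2 = 1/4 := by
      have h2 : sd^2 = VarS m := Real.sq_sqrt (hVpos m).le
      rw [← hVarSeq m]
      field_simp
      nlinarith [h2]
    rw [hvv] at hch
    set B := {ω | 2*sd ≤ |S m ω - ES m|} with hB
    have hBmeas : MeasurableSet B := by
      apply measurableSet_le measurable_const
      exact ((hSmeas m).sub measurable_const).abs
    have hsub : Bᶜ ⊆ {ω | S m ω ∈ Set.Icc (ES m - 2*sd) (ES m + 2*sd)} := by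
      intro ω hω
      simp only [hB, Set.mem_compl_iff, Set.mem_setOf_eq, not_le] at hω
      have := abs_lt.1 hω
      constructor <;> linarith [this.1, this.2]
    have h1 : ℙ Bᶜ ≤ ℙ {ω | S m ω ∈ Set.Icc (ES m - 2*sd) (ES m + 2*sd)} := measure_mono hsub
    have h2 : ℙ Bᶜ = 1 - ℙ B := prob_compl_eq_one_sub hBmeas
    have hBle : (ℙ B).toReal ≤ 1/4 := by
      have := ENNReal.toReal_mono ENNReal.ofReal_ne_top hch
      rwa [ENNReal.toReal_ofReal (by norm_num)] at this
    have hcompl : (3:ℝ)/4 ≤ (ℙ Bᶜ).toReal := by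
      rw [h2, ENNReal.toReal_sub_of_le prob_le_one ENNReal.one_ne_top, ENNReal.toReal_one]
      linarith
    exact hcompl.trans (ENNReal.toReal_mono (measure_ne_top _ _) h1)
  -- positivity of total sample size
  have hnpos_n : ∀ m, 0 < n m := fun m => by
    rw [hn m]
    exact Finset.sum_pos (fun j _ => hnpos m j) ⟨j0, Finset.mem_univ _⟩
  -- eventual lower bounds on sampling fractions
  have hfrac' : ∀ j : Fin k, ∃ c : ℝ, 0 < c ∧ ∀ᶠ m in atTop, c * (n m : ℝ) ≤ (nn m j : ℝ) := by
    intro j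
    have hbdd : IsBoundedUnder (· ≥ ·) atTop (fun m => (nn m j : ℝ) / (n m : ℝ)) :=
      ⟨0, Filter.eventually_map.2 (Filter.Eventually.of_forall fun m =>
        div_nonneg (Nat.cast_nonneg _) (Nat.cast_nonneg _))⟩
    have hev := eventually_lt_of_lt_liminf (half_lt_self (hfrac j)) hbdd
    refine ⟨_, half_pos (hfrac j), ?_⟩
    filter_upwards [hev] with m hm
    have hnm : (0:ℝ) < (n m : ℝ) := by exact_mod_cast hnpos_n m
    exact ((lt_div_iff₀ hnm).1 hm).le
  choose cf hcfpos hcf using hfrac'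
  set C := ∑ j, variance (X j 0) ℙ / cf j with hC
  have hCpos : 0 < C :=
    Finset.sum_pos (fun j _ => div_pos (hnondeg j) (hcfpos j)) ⟨j0, Finset.mem_univ _⟩
  have hVev : ∀ᶠ m in atTop, VarS m ≤ C / (n m : ℝ) := by
    have hall : ∀ᶠ m in atTop, ∀ j : Fin k, cf j * (n m:ℝ) ≤ (nn m j : ℝ) :=
      eventually_all.2 fun j => hcf j
    filter_upwards [hall] with m hm
    have hnm : (0:ℝ) < (n m : ℝ) := by exact_mod_cast hnpos_n m
    rw [hVarSeq m, hVarSum m]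
    calc ∑ j, variance (X j 0) ℙ / (nn m j:ℝ)
        ≤ ∑ j, variance (X j 0) ℙ / (cf j * (n m:ℝ)) := by
          refine Finset.sum_le_sum fun j _ => ?_
          exact div_le_div_of_nonneg_left (hnondeg j).le
            (mul_pos (hcfpos j) hnm) (hm j)
      _ = C / (n m : ℝ) := by
          rw [hC, Finset.sum_div]
          exact Finset.sum_congr rfl fun j _ => (div_div _ _ _).symm
  -- the constants
  have he0 : (0:ℝ) < e j0 := hepos j0
  set K : ℝ := 4 * D * Real.sqrt C / e j0 + 1 with hK
  have hKpos : 0 < K := by positivity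
  set ε : ℝ := 3 / (32 * K) with hεdef
  have hεpos : 0 < ε := by positivity
  obtain ⟨m, hbound, hVle⟩ := ((hcontra ε hεpos).and hVev).exists
  -- work at this fixed m
  have hnm1 : (1:ℝ) ≤ (n m : ℝ) := by exact_mod_cast hnpos_n m
  have hnmpos : (0:ℝ) < (n m : ℝ) := by linarith
  have hsqn1 : (1:ℝ) ≤ Real.sqrt (n m) := by
    rw [show (1:ℝ) = Real.sqrt 1 from (Real.sqrt_one).symm]
    exact Real.sqrt_le_sqrt hnm1
  have hsqnpos : (0:ℝ) < Real.sqrt (n m) := by linarith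
  set sd := Real.sqrt (VarS m) with hsddef
  have hsdpos : 0 < sd := Real.sqrt_pos.2 (hVpos m)
  set h' := e j0 / ((nn m j0 : ℝ) * D) with hh'def
  have hnn0pos : (0:ℝ) < (nn m j0 : ℝ) := by exact_mod_cast hnpos m j0
  have hh'pos : 0 < h' := by rw [hh'def]; positivity
  obtain ⟨x₀, hatom⟩ := exists_atom_of_grid (S m) (hSmeas m) ((k:ℝ)*xl j0) h'
      (ES m - 2*sd) (ES m + 2*sd) hh'pos (by linarith) (hgridae m) (hcheb m)
  have hlen : ES m + 2*sd - (ES m - 2*sd) = 4*sd := by ring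
  rw [hlen] at hatom
  -- bound on the number of grid points
  have hsd_le : sd ≤ Real.sqrt C / Real.sqrt (n m) := by
    rw [hsddef, ← Real.sqrt_div hCpos.le]
    exact Real.sqrt_le_sqrt hVle
  have hnn0le : (nn m j0 : ℝ) ≤ (n m : ℝ) := by
    have hle : nn m j0 ≤ n m := by
      rw [hn m]
      exact Finset.single_le_sum (f := fun j => nn m j) (fun j _ => Nat.zero_le _)
        (Finset.mem_univ j0)
    exact_mod_cast hle
  have hsn : Real.sqrt (n m) * Real.sqrt (n m) = (n m : ℝ) :=
    Real.mul_self_sqrt (Nat.cast_nonneg _)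
  have hcount : 4*sd/h' + 1 ≤ K * Real.sqrt (n m) := by
    have e1 : sd * (nn m j0:ℝ) ≤ (Real.sqrt C / Real.sqrt (n m)) * (n m : ℝ) :=
      mul_le_mul hsd_le hnn0le (Nat.cast_nonneg _) (by positivity)
    have e2 : (Real.sqrt C / Real.sqrt (n m)) * (n m : ℝ) = Real.sqrt C * Real.sqrt (n m) := by
      rw [div_mul_eq_mul_div, mul_div_assoc, Real.div_sqrt]
    have h4 : 4*sd/h' ≤ (4 * D * Real.sqrt C / e j0) * Real.sqrt (n m) := by
      rw [hh'def, div_div_eq_mul_div, div_mul_eq_mul_div, div_le_div_iff_of_pos_right he0]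
      have key : sd * (nn m j0:ℝ) ≤ Real.sqrt C * Real.sqrt (n m) := e1.trans_eq e2
      calc 4*sd*((nn m j0:ℝ)*D) = 4*(D:ℝ)*(sd*(nn m j0:ℝ)) := by ring
        _ ≤ 4*(D:ℝ)*(Real.sqrt C * Real.sqrt (n m)) :=
            mul_le_mul_of_nonneg_left key (by positivity)
        _ = 4*D*Real.sqrt C*Real.sqrt (n m) := by ring
    have : (4 * D * Real.sqrt C / e j0) * Real.sqrt (n m) + 1 ≤ K * Real.sqrt (n m) := by
      rw [hK]
      have : (4 * D * Real.sqrt C / e j0 + 1) * Real.sqrt (n m)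
          = (4 * D * Real.sqrt C / e j0) * Real.sqrt (n m) + Real.sqrt (n m) := by ring
      rw [this]
      linarith
    linarith
  -- lower bound the atom
  have hatom' : 8 * ε * (Real.sqrt (n m))⁻¹ ≤ (ℙ {ω | S m ω = x₀}).toReal := by
    have hden_pos : (0:ℝ) < 4*sd/h' + 1 := by positivity
    have h1 : (3:ℝ)/4 / (K * Real.sqrt (n m)) ≤ (3:ℝ)/4 / (4*sd/h' + 1) :=
      div_le_div_of_nonneg_left (by norm_num) hden_pos hcount
    have h2 : (3:ℝ)/4 / (K * Real.sqrt (n m)) = 8 * ε * (Real.sqrt (n m))⁻¹ := by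
      rw [hεdef]
      field_simp
      ring
    linarith [h1.trans hatom]
  -- the CDF comparison
  set G : ℝ → ℝ := fun x => gPhi x + (Real.sqrt (n m))⁻¹ * (β m / 6) * (1 - x^2) * gphi x
    with hGdef
  have hGcont : Continuous G := by
    rw [hGdef]
    apply gPhi_cont.add
    exact (continuous_const.mul ((continuous_const.sub (continuous_pow 2)))).mul gphi_cont
  have hFG : ∀ x, |(ℙ {ω | (S m ω - ES m)/sd ≤ x}).toReal - G x|
      ≤ ε * (Real.sqrt (n m))⁻¹ := by
    intro x
    have hx := hbound x
    have heq : (ℙ {ω | (S m ω - ES m)/sd ≤ x}).toReal - G x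
        = (ℙ {ω | (S m ω - ES m)/sd ≤ x}).toReal - gPhi x
          - (Real.sqrt (n m))⁻¹ * (β m / 6) * (1 - x^2) * gphi x := by
      rw [hGdef]; ring
    rw [heq]
    exact hx
  set t₀ := (x₀ - ES m)/sd with ht₀
  have hstep : ∀ y : ℝ, y < t₀ → (ℙ {ω | S m ω = x₀}).toReal
      ≤ (ℙ {ω | (S m ω - ES m)/sd ≤ t₀}).toReal
        - (ℙ {ω | (S m ω - ES m)/sd ≤ y}).toReal := by
    intro y hy
    have hmeas2 : MeasurableSet {ω | (S m ω - ES m)/sd ≤ y} :=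
      measurableSet_le (((hSmeas m).sub measurable_const).div_const _) measurable_const
    have hsub12 : {ω | (S m ω - ES m)/sd ≤ y} ⊆ {ω | (S m ω - ES m)/sd ≤ t₀} :=
      fun ω h => le_trans h hy.le
    have hsub0 : {ω | S m ω = x₀}
        ⊆ {ω | (S m ω - ES m)/sd ≤ t₀} \ {ω | (S m ω - ES m)/sd ≤ y} := by
      intro ω hω
      have hT : (S m ω - ES m)/sd = t₀ := by
        rw [Set.mem_setOf_eq] at hω
        rw [hω, ht₀]
      constructor
      · exact le_of_eq hT
      · simp only [Set.mem_setOf_eq, not_le]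
        rw [hT]
        exact hy
    have hd := measure_diff hsub12 hmeas2.nullMeasurableSet (measure_ne_top ℙ _)
    calc (ℙ {ω | S m ω = x₀}).toReal
        ≤ (ℙ ({ω | (S m ω - ES m)/sd ≤ t₀} \ {ω | (S m ω - ES m)/sd ≤ y})).toReal :=
          ENNReal.toReal_mono (measure_ne_top _ _) (measure_mono hsub0)
      _ = _ := by
          rw [hd, ENNReal.toReal_sub_of_le (measure_mono hsub12) (measure_ne_top _ _)]
  have hcdf : ∀ y, y < t₀ → (ℙ {ω | S m ω = x₀}).toReal
      ≤ 2*ε*(Real.sqrt (n m))⁻¹ + (G t₀ - G y) := by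
    intro y hy
    have h1 := abs_le.1 (hFG t₀)
    have h2 := abs_le.1 (hFG y)
    have h3 := hstep y hy
    linarith [h1.1, h1.2, h2.1, h2.2]
  have hlim : (ℙ {ω | S m ω = x₀}).toReal ≤ 2*ε*(Real.sqrt (n m))⁻¹ := by
    apply le_of_forall_pos_le_add
    intro δ hδ
    obtain ⟨η, hη, hball⟩ := Metric.continuous_iff.1 hGcont t₀ δ hδ
    have hyd : dist (t₀ - η/2) t₀ < η := by
      rw [Real.dist_eq]
      rw [show t₀ - η/2 - t₀ = -(η/2) by ring, abs_neg, abs_of_nonneg (by linarith)]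
      linarith
    have hGd := hball _ hyd
    rw [Real.dist_eq] at hGd
    have habs := abs_lt.1 hGd
    have := hcdf (t₀ - η/2) (by linarith)
    linarith [habs.1, habs.2]
  have hsninv : (0:ℝ) < (Real.sqrt (n m))⁻¹ := by positivity
  nlinarith [hatom'.trans hlim, mul_pos (mul_pos (by norm_num : (0:ℝ) < 6) hεpos) hsninv]
end

section
/- Let ρ₀ be an irrational number of type η < ∞, let δ > 0, and let C > 0 be a constant such that ⟨ℓρ₀⟩ ≥ C ℓ^{−η−δ} for all integers ℓ ≥ 1. Let m ≥ 1 be an integer and let τ be a real number with |τ − ρ₀| ≤ C π^{−1} m^{−(1+η+δ)}. Then |sin(ℓτπ)| ≥ ⟨ℓρ₀⟩ for every ℓ with 1 ≤ ℓ ≤ m, and consequently ∑_{ℓ=1}^m 1/(ℓ|sin(ℓτπ)|) ≤ ∑_{ℓ=1}^m 1/(ℓ⟨ℓρ₀⟩). -/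
open Filter

/-- `⟨x⟩`, the distance from `x` to the nearest integer:
`⟨x⟩ = min {x − ⌊x⌋, 1 − (x − ⌊x⌋)}`. -/
noncomputable def distNearestInt (x : ℝ) : ℝ := min (x - ⌊x⌋) (1 - (x - ⌊x⌋))

/-- The set of exponents `ζ ≥ 0` with `liminf_{p → ∞} p^ζ ⟨pρ⟩ = 0` (`p` a positive
integer); the liminf condition is expressed in its `ε`–`frequently` form. -/
def typeSet (ρ : ℝ) : Set ℝ :=
  {ζ : ℝ | 0 ≤ ζ ∧ ∀ ε > 0, ∃ᶠ p : ℕ in atTop, (p : ℝ) ^ ζ * distNearestInt (p * ρ) < ε}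

/-- An irrational number `ρ` is of type `η` if `η` is the supremum of `typeSet ρ`. -/
def IsOfType (ρ η : ℝ) : Prop := IsLUB (typeSet ρ) η

lemma distNearestInt_eq_abs_sub_round (x : ℝ) : distNearestInt x = |x - round x| := by
  rw [abs_sub_round_eq_min]; rfl

lemma distNearestInt_le (x : ℝ) (n : ℤ) : distNearestInt x ≤ |x - n| := by
  rw [distNearestInt_eq_abs_sub_round]; exact round_le x n

lemma distNearestInt_pos {x : ℝ} (hx : Irrational x) : 0 < distNearestInt x := by
  rw [distNearestInt_eq_abs_sub_round]
  refine abs_pos.2 (sub_ne_zero.2 fun h => ?_)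
  exact hx ⟨(round x : ℚ), by push_cast; exact h.symm⟩

/-- Jordan's inequality transported to `2⟨x⟩ ≤ |sin (x π)|`. -/
lemma two_mul_distNearestInt_le (x : ℝ) :
    2 * distNearestInt x ≤ |Real.sin (x * Real.pi)| := by
  have hπ : (0:ℝ) < Real.pi := Real.pi_pos
  set f : ℝ := Int.fract x with hf
  have hf0 : 0 ≤ f := Int.fract_nonneg x
  have hf1 : f < 1 := Int.fract_lt_one x
  have hd : distNearestInt x = min f (1 - f) := rfl
  have hxf : x = f + (⌊x⌋ : ℝ) := by rw [hf, Int.fract]; ring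
  have habs : |Real.sin (x * Real.pi)| = Real.sin (f * Real.pi) := by
    rw [hxf, add_mul, Real.sin_add_int_mul_pi, abs_mul]
    have h1 : |((-1:ℝ)) ^ ⌊x⌋| = 1 := by rcases Int.even_or_odd ⌊x⌋ with h | h <;> simp [h.neg_one_zpow]
    rw [h1, one_mul]
    exact abs_of_nonneg (Real.sin_nonneg_of_nonneg_of_le_pi (by positivity)
      (by nlinarith))
  rw [habs, hd]
  rcases le_total f (1/2) with h | h
  · rw [min_eq_left (by linarith)]
    have := Real.mul_le_sin (x := f * Real.pi) (by positivity) (by nlinarith)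
    calc 2 * f = 2 / Real.pi * (f * Real.pi) := by field_simp
      _ ≤ _ := this
  · rw [min_eq_right (by linarith)]
    have h2 : Real.sin (f * Real.pi) = Real.sin ((1 - f) * Real.pi) := by
      rw [show (1 - f) * Real.pi = Real.pi - f * Real.pi by ring, Real.sin_pi_sub]
    rw [h2]
    have := Real.mul_le_sin (x := (1 - f) * Real.pi) (by nlinarith) (by nlinarith)
    calc 2 * (1 - f) = 2 / Real.pi * ((1 - f) * Real.pi) := by field_simp
      _ ≤ _ := this

lemma abs_sin_sub_sin_le (a b : ℝ) : |Real.sin a - Real.sin b| ≤ |a - b| := by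
  rw [Real.sin_sub_sin]
  calc |2 * Real.sin ((a - b) / 2) * Real.cos ((a + b) / 2)|
      = 2 * |Real.sin ((a - b) / 2)| * |Real.cos ((a + b) / 2)| := by
        rw [abs_mul, abs_mul]; norm_num
    _ ≤ 2 * |(a - b) / 2| * 1 := by
        apply mul_le_mul (mul_le_mul_of_nonneg_left Real.abs_sin_le_abs (by norm_num))
          (Real.abs_cos_le_one _) (abs_nonneg _) (by positivity)
    _ = |a - b| := by rw [mul_one, abs_div, abs_two]; ring

/-- `0` belongs to the type set of any irrational number (Dirichlet). -/
lemma zero_mem_typeSet {ρ : ℝ} (hρ : Irrational ρ) : (0:ℝ) ∈ typeSet ρ := by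
  refine ⟨le_refl 0, fun ε hε => ?_⟩
  rw [Filter.frequently_atTop]
  intro N
  -- minimum of distNearestInt (k ρ) over 1 ≤ k ≤ N + 1
  obtain ⟨k₀, hk₀mem, hk₀min⟩ := (Finset.Icc 1 (N+1)).exists_min_image
    (fun k => distNearestInt (k * ρ)) ⟨1, by simp⟩
  set c : ℝ := distNearestInt (k₀ * ρ) with hc
  have hcpos : 0 < c := by
    refine distNearestInt_pos (hρ.natCast_mul ?_)
    have := (Finset.mem_Icc.1 hk₀mem).1
    positivity
  obtain ⟨n, hn⟩ := exists_nat_one_div_lt (lt_min hε hcpos)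
  obtain ⟨k, hk0, hkn, hkb⟩ := Real.exists_nat_abs_mul_sub_round_le ρ (Nat.succ_pos n)
  have hdk : distNearestInt (k * ρ) < min ε c := by
    refine lt_of_le_of_lt ?_ hn
    rw [distNearestInt_eq_abs_sub_round]
    calc |(k:ℝ) * ρ - round ((k:ℝ) * ρ)| ≤ 1 / ((n+1 : ℕ) + 1) := hkb
      _ ≤ 1 / ((n:ℝ) + 1) := by
          apply one_div_le_one_div_of_le (by positivity); push_cast; linarith
  have hkN : N ≤ k := by
    by_contra hlt
    push_neg at hlt
    have hkmem : k ∈ Finset.Icc 1 (N+1) := Finset.mem_Icc.2 ⟨hk0, by omega⟩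
    have := hk₀min k hkmem
    have := hdk.trans_le (min_le_right _ _)
    linarith
  refine ⟨k, hkN, ?_⟩
  rw [Real.rpow_zero, one_mul]
  exact hdk.trans_le (min_le_left _ _)

/-- Let `ρ₀` be an irrational number of (finite) type `η`, `δ > 0`, and `C > 0` a constant
with `⟨ℓρ₀⟩ ≥ C ℓ^{−η−δ}` for all integers `ℓ ≥ 1`.  If `m ≥ 1` is an integer and `τ` a
real number with `|τ − ρ₀| ≤ C π^{−1} m^{−(1+η+δ)}`, then `|sin (ℓτπ)| ≥ ⟨ℓρ₀⟩` for every
`1 ≤ ℓ ≤ m`, and consequently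
`∑_{ℓ=1}^m 1/(ℓ|sin (ℓτπ)|) ≤ ∑_{ℓ=1}^m 1/(ℓ⟨ℓρ₀⟩)`. -/
theorem sum_inv_abs_sin_le_sum_inv_distNearestInt
    (ρ₀ η δ C : ℝ) (hirr : Irrational ρ₀) (htype : IsOfType ρ₀ η)
    (hδ : 0 < δ) (hC : 0 < C)
    (hlow : ∀ ℓ : ℕ, 1 ≤ ℓ → C * (ℓ : ℝ) ^ (-η - δ) ≤ distNearestInt (ℓ * ρ₀))
    (m : ℕ) (hm : 1 ≤ m) (τ : ℝ)
    (hτ : |τ - ρ₀| ≤ C / Real.pi * (m : ℝ) ^ (-(1 + η + δ))) :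
    (∀ ℓ : ℕ, 1 ≤ ℓ → ℓ ≤ m →
        distNearestInt (ℓ * ρ₀) ≤ |Real.sin (ℓ * τ * Real.pi)|) ∧
      ∑ ℓ ∈ Finset.Icc 1 m, 1 / ((ℓ : ℝ) * |Real.sin (ℓ * τ * Real.pi)|) ≤
        ∑ ℓ ∈ Finset.Icc 1 m, 1 / ((ℓ : ℝ) * distNearestInt (ℓ * ρ₀)) := by
  have hπ : (0:ℝ) < Real.pi := Real.pi_pos
  have hη : 0 ≤ η := htype.1 (zero_mem_typeSet hirr)
  have key : ∀ ℓ : ℕ, 1 ≤ ℓ → ℓ ≤ m →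
      distNearestInt (ℓ * ρ₀) ≤ |Real.sin (ℓ * τ * Real.pi)| := by
    intro ℓ hℓ1 hℓm
    have hℓR : (1:ℝ) ≤ (ℓ:ℝ) := by exact_mod_cast hℓ1
    have hmR : (ℓ:ℝ) ≤ (m:ℝ) := by exact_mod_cast hℓm
    have hm1 : (1:ℝ) ≤ (m:ℝ) := le_trans hℓR hmR
    set d : ℝ := distNearestInt (ℓ * ρ₀) with hd
    have hdlow : C * (ℓ:ℝ) ^ (-η - δ) ≤ d := hlow ℓ hℓ1
    have hdpos : 0 < d := lt_of_lt_of_le (by positivity) hdlow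
    -- |ℓτπ - ℓρ₀π| ≤ d
    have hdiff : |(ℓ:ℝ) * τ * Real.pi - (ℓ:ℝ) * ρ₀ * Real.pi| ≤ d := by
      have h1 : |(ℓ:ℝ) * τ * Real.pi - (ℓ:ℝ) * ρ₀ * Real.pi|
          = (ℓ:ℝ) * Real.pi * |τ - ρ₀| := by
        rw [show (ℓ:ℝ) * τ * Real.pi - (ℓ:ℝ) * ρ₀ * Real.pi
            = (ℓ:ℝ) * Real.pi * (τ - ρ₀) by ring, abs_mul]
        rw [abs_of_nonneg (by positivity)]
      rw [h1]
      have h2 : (ℓ:ℝ) * Real.pi * |τ - ρ₀|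
          ≤ (ℓ:ℝ) * Real.pi * (C / Real.pi * (m:ℝ) ^ (-(1+η+δ))) := by
        gcongr
      have h3 : (ℓ:ℝ) * Real.pi * (C / Real.pi * (m:ℝ) ^ (-(1+η+δ)))
          = C * ((ℓ:ℝ) * (m:ℝ) ^ (-(1+η+δ))) := by
        field_simp
      have h4 : (ℓ:ℝ) * (m:ℝ) ^ (-(1+η+δ)) ≤ (ℓ:ℝ) ^ (-η - δ) := by
        have hmpos : (0:ℝ) < (m:ℝ) := by linarith
        have e1 : (m:ℝ) ^ (-(1+η+δ)) = (m:ℝ)⁻¹ * (m:ℝ) ^ (-(η+δ)) := by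
          rw [← Real.rpow_neg_one, ← Real.rpow_add hmpos]; ring_nf
        have e2 : (m:ℝ) ^ (-(η+δ)) ≤ (ℓ:ℝ) ^ (-(η+δ)) := by
          rw [Real.rpow_neg (by positivity), Real.rpow_neg (by positivity)]
          apply inv_anti₀ (by positivity)
          exact Real.rpow_le_rpow (by positivity) hmR (by linarith)
        calc (ℓ:ℝ) * (m:ℝ) ^ (-(1+η+δ)) = (ℓ:ℝ) * (m:ℝ)⁻¹ * (m:ℝ) ^ (-(η+δ)) := by
              rw [e1]; ring
          _ ≤ 1 * (ℓ:ℝ) ^ (-(η+δ)) := by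
              apply mul_le_mul _ e2 (by positivity) (by norm_num)
              rw [mul_inv_le_iff₀ hmpos, one_mul]; exact hmR
          _ = (ℓ:ℝ) ^ (-η - δ) := by rw [one_mul]; ring_nf
      calc (ℓ:ℝ) * Real.pi * |τ - ρ₀| ≤ C * ((ℓ:ℝ) * (m:ℝ) ^ (-(1+η+δ))) := by
            rw [← h3]; exact h2
        _ ≤ C * (ℓ:ℝ) ^ (-η - δ) := by gcongr
        _ ≤ d := hdlow
    have hsin : 2 * d ≤ |Real.sin ((ℓ:ℝ) * ρ₀ * Real.pi)| := by
      have := two_mul_distNearestInt_le ((ℓ:ℝ) * ρ₀)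
      rwa [← hd] at this
    have htri : |Real.sin ((ℓ:ℝ) * ρ₀ * Real.pi)| - |Real.sin ((ℓ:ℝ) * τ * Real.pi)|
        ≤ d := by
      calc _ ≤ |Real.sin ((ℓ:ℝ) * ρ₀ * Real.pi) - Real.sin ((ℓ:ℝ) * τ * Real.pi)| :=
            abs_sub_abs_le_abs_sub _ _
        _ ≤ |(ℓ:ℝ) * ρ₀ * Real.pi - (ℓ:ℝ) * τ * Real.pi| := abs_sin_sub_sin_le _ _
        _ = |(ℓ:ℝ) * τ * Real.pi - (ℓ:ℝ) * ρ₀ * Real.pi| := abs_sub_comm _ _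
        _ ≤ d := hdiff
    linarith
  refine ⟨key, Finset.sum_le_sum fun ℓ hℓ => ?_⟩
  rw [Finset.mem_Icc] at hℓ
  have hℓR : (1:ℝ) ≤ (ℓ:ℝ) := by exact_mod_cast hℓ.1
  have hdpos : 0 < distNearestInt (ℓ * ρ₀) :=
    lt_of_lt_of_le (by positivity) (hlow ℓ hℓ.1)
  apply one_div_le_one_div_of_le (by positivity)
  exact mul_le_mul_of_nonneg_left (key ℓ hℓ.1 hℓ.2) (by positivity)
end
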